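/- arXiv:1903.05639 — 2 statements merged into one kernel-verified Lean document; each statement's English description precedes it below -/
import Mathlib

section
/- Let μ : [0,∞) → ℝ be a non-negative, non-decreasing, right-continuous function with μ(0) = 0 and let α ≥ 0. Assume that the Laplace transform μ̂(t) = ∫₀^∞ e^{−tλ} dμ(λ) is finite for every t > 0 and that t^α μ̂(t) → 1 as t → 0⁺. Then μ(λ) λ^{−α} → 1/Γ(α+1) as λ → ∞. -/
open MeasureTheory Filter

section KaramataAux
open Set

noncomputable def ktTrap (a b x : ℝ) : ℝ := min 1 (max 0 ((b - x) / (b - a)))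

lemma ktTrap_continuous (a b : ℝ) : Continuous (ktTrap a b) :=
  continuous_const.min (continuous_const.max ((continuous_const.sub continuous_id).div_const _))

lemma ktTrap_nonneg (a b x : ℝ) : 0 ≤ ktTrap a b x :=
  le_min zero_le_one (le_max_left _ _)

lemma ktTrap_le_one (a b x : ℝ) : ktTrap a b x ≤ 1 := min_le_left _ _

lemma ktTrap_eq_one {a b x : ℝ} (hab : a < b) (hx : x ≤ a) : ktTrap a b x = 1 := by
  have h1 : (1:ℝ) ≤ (b - x) / (b - a) := by
    rw [le_div_iff₀ (by linarith)]; linarith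
  unfold ktTrap
  rw [min_eq_left (le_max_of_le_right h1)]

lemma ktTrap_eq_zero {a b x : ℝ} (hab : a < b) (hx : b ≤ x) : ktTrap a b x = 0 := by
  have h1 : (b - x) / (b - a) ≤ 0 := div_nonpos_of_nonpos_of_nonneg (by linarith) (by linarith)
  unfold ktTrap
  rw [max_eq_left h1, min_eq_right zero_le_one]

lemma ktTrap_le_exp {a b : ℝ} (hab : a < b) (x : ℝ) :
    ktTrap a b x ≤ Real.exp b * Real.exp (-x) := by
  rw [← Real.exp_add]
  rcases le_or_gt x b with h | h
  · exact (ktTrap_le_one a b x).trans (by rw [← Real.exp_zero]; exact Real.exp_le_exp.2 (by linarith))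
  · rw [ktTrap_eq_zero hab h.le]; positivity

noncomputable def ktQ (a b u : ℝ) : ℝ := ktTrap a b (-Real.log u) / u

lemma ktTrap_eq_exp_mul (a b x : ℝ) :
    ktTrap a b x = Real.exp (-x) * ktQ a b (Real.exp (-x)) := by
  unfold ktQ
  rw [Real.log_exp, neg_neg, mul_div_cancel₀ _ (Real.exp_ne_zero _)]

lemma ktQ_contOn {a b : ℝ} (ha : 0 < a) (hab : a < b) :
    ContinuousOn (ktQ a b) (Icc 0 1) := by
  intro u hu
  rcases eq_or_lt_of_le hu.1 with h0 | h0
  · -- u = 0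
    have hq0 : ktQ a b 0 = 0 := by unfold ktQ; rw [div_zero]
    rw [← h0]
    have hmem : Iio (Real.exp (-b)) ∩ Icc 0 1 ∈ nhdsWithin (0:ℝ) (Icc 0 1) :=
      inter_mem (mem_nhdsWithin_of_mem_nhds (Iio_mem_nhds (Real.exp_pos _))) self_mem_nhdsWithin
    have heq : ∀ v ∈ Iio (Real.exp (-b)) ∩ Icc 0 1, ktQ a b v = 0 := by
      intro v hv
      rcases eq_or_lt_of_le hv.2.1 with hv0 | hv0
      · rw [← hv0]; exact hq0
      · have hlog : Real.log v < -b := by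
          have := Real.log_lt_log hv0 hv.1
          rwa [Real.log_exp] at this
        unfold ktQ
        rw [ktTrap_eq_zero hab (by linarith), zero_div]
    apply ContinuousWithinAt.congr_of_eventuallyEq (continuousWithinAt_const : ContinuousWithinAt (fun _ => (0:ℝ)) _ _)
    · exact Filter.eventuallyEq_of_mem hmem heq
    · exact hq0
  · -- 0 < u
    apply ContinuousWithinAt.div
    · exact (((ktTrap_continuous a b).continuousAt).comp
        ((Real.continuousAt_log h0.ne').neg)).continuousWithinAt
    · exact continuousWithinAt_id
    · exact h0.ne'

section VolumeSide
variable {α : ℝ}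

lemma kt_rpow_contOn : ContinuousOn (fun x : ℝ => x ^ (α - 1)) (Ioi 0) :=
  fun x hx => (Real.continuousAt_rpow_const x (α - 1) (Or.inl (ne_of_gt hx))).continuousWithinAt

lemma kt_W (hα : 0 < α) {s : ℝ} (hs : 0 < s) :
    IntegrableOn (fun x : ℝ => x ^ (α - 1) * Real.exp (-(s * x))) (Ioi 0) := by
  have h := integrableOn_rpow_mul_exp_neg_mul_rpow (p := 1) (s := α - 1) (b := s)
    (by linarith) one_pos hs
  simpa [Real.rpow_one, neg_mul] using h

lemma kt_gamma_int (hα : 0 < α) {s : ℝ} (hs : 0 < s) :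
    ∫ x in Ioi (0:ℝ), x ^ (α - 1) * Real.exp (-(s * x)) = s ^ (-α) * Real.Gamma α := by
  rw [Real.integral_rpow_mul_exp_neg_mul_Ioi hα hs, one_div, Real.inv_rpow hs.le,
    ← Real.rpow_neg hs.le]

lemma kt_trap_intOn (hα : 0 < α) {a b : ℝ} (hab : a < b) :
    IntegrableOn (fun x : ℝ => ktTrap a b x * x ^ (α - 1)) (Ioi 0) := by
  apply Integrable.mono' (((kt_W hα one_pos).const_mul (Real.exp b)))
  · exact (((ktTrap_continuous a b).continuousOn.mul kt_rpow_contOn).aestronglyMeasurable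
      measurableSet_Ioi)
  · filter_upwards [self_mem_ae_restrict measurableSet_Ioi] with x hx
    have hx0 : (0:ℝ) < x := hx
    have h1 : 0 ≤ x ^ (α - 1) := Real.rpow_nonneg hx0.le _
    rw [Real.norm_eq_abs, abs_mul, abs_of_nonneg (ktTrap_nonneg a b x), abs_of_nonneg h1]
    calc ktTrap a b x * x ^ (α - 1) ≤ (Real.exp b * Real.exp (-x)) * x ^ (α - 1) :=
          mul_le_mul_of_nonneg_right (ktTrap_le_exp hab x) h1
      _ = Real.exp b * (x ^ (α - 1) * Real.exp (-(1 * x))) := by rw [one_mul]; ring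

lemma kt_rpow_Ioc (hα : 0 < α) {c : ℝ} (hc : 0 < c) :
    ∫ x in Ioc (0:ℝ) c, x ^ (α - 1) = c ^ α / α := by
  rw [← intervalIntegral.integral_of_le hc.le, integral_rpow
    (Or.inl (by linarith))]
  rw [sub_add_cancel, Real.zero_rpow hα.ne']
  ring

end VolumeSide

section
variable (μ : StieltjesFunction ℝ)

lemma kt_tendsto_atBot (hzero : ∀ x : ℝ, x ≤ 0 → μ x = 0) :
    Tendsto (μ : ℝ → ℝ) atBot (nhds 0) := by
  apply Tendsto.congr' _ (tendsto_const_nhds (α := ℝ) (x := 0))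
  filter_upwards [eventually_le_atBot (0:ℝ)] with x hx
  exact (hzero x hx).symm

lemma kt_measure_Iic (hzero : ∀ x : ℝ, x ≤ 0 → μ x = 0) (x : ℝ) :
    μ.measure (Iic x) = ENNReal.ofReal (μ x) := by
  rw [μ.measure_Iic (kt_tendsto_atBot μ hzero), sub_zero]

lemma kt_ae_pos (hzero : ∀ x : ℝ, x ≤ 0 → μ x = 0) :
    ∀ᵐ x ∂μ.measure, 0 < x := by
  have h : μ.measure (Iic 0) = 0 := by
    rw [kt_measure_Iic μ hzero, hzero 0 le_rfl, ENNReal.ofReal_zero]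
  rw [ae_iff]
  refine measure_mono_null (fun x hx => ?_) h
  simpa using not_lt.mp hx

lemma kt_indicator_integrable (hzero : ∀ x : ℝ, x ≤ 0 → μ x = 0) (l : ℝ) :
    Integrable ((Iic l).indicator (fun _ => (1:ℝ))) μ.measure := by
  rw [integrable_indicator_iff measurableSet_Iic]
  refine integrableOn_const ?_
  rw [kt_measure_Iic μ hzero]
  exact ENNReal.ofReal_ne_top

lemma kt_integral_indicator (hzero : ∀ x : ℝ, x ≤ 0 → μ x = 0)
    (hnonneg : ∀ x : ℝ, 0 ≤ μ x) (l : ℝ) :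
    ∫ x, (Iic l).indicator (fun _ => (1:ℝ)) x ∂μ.measure = μ l := by
  rw [integral_indicator measurableSet_Iic, setIntegral_const, smul_eq_mul, mul_one,
    measureReal_def, kt_measure_Iic μ hzero, ENNReal.toReal_ofReal (hnonneg l)]

lemma kt_M1 (α : ℝ)
    (hlaplace : Tendsto (fun t : ℝ => t ^ α * ∫ x : ℝ, Real.exp (-t * x) ∂μ.measure)
      (nhdsWithin 0 (Set.Ioi 0)) (nhds 1))
    {s : ℝ} (hs : 0 < s) :
    Tendsto (fun t : ℝ => t ^ α * ∫ x : ℝ, Real.exp (-(s * t) * x) ∂μ.measure)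
      (nhdsWithin 0 (Set.Ioi 0)) (nhds (s ^ (-α))) := by
  have hmap : Tendsto (fun t : ℝ => s * t) (nhdsWithin 0 (Set.Ioi 0)) (nhdsWithin 0 (Set.Ioi 0)) := by
    apply tendsto_nhdsWithin_of_tendsto_nhds_of_eventually_within
    · have h0 : Tendsto (fun t : ℝ => s * t) (nhds 0) (nhds (s * 0)) :=
        (continuous_const.mul continuous_id).tendsto 0
      rw [mul_zero] at h0
      exact h0.mono_left nhdsWithin_le_nhds
    · filter_upwards [self_mem_nhdsWithin] with t ht
      exact mul_pos hs ht
  have h2 := hlaplace.comp hmap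
  have h3 := h2.const_mul (s ^ (-α))
  rw [mul_one] at h3
  apply h3.congr'
  filter_upwards [self_mem_nhdsWithin] with t ht
  have ht' : (0:ℝ) < t := ht
  simp only [Function.comp]
  rw [Real.mul_rpow hs.le ht'.le, ← mul_assoc, ← mul_assoc, ← Real.rpow_add hs]
  simp

end

set_option maxHeartbeats 1000000 in
lemma kt_key (μ : StieltjesFunction ℝ) {α : ℝ} (hα : 0 < α)
    (hzero : ∀ x : ℝ, x ≤ 0 → μ x = 0)
    (hint : ∀ t : ℝ, 0 < t → Integrable (fun x : ℝ => Real.exp (-t * x)) μ.measure)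
    (hlaplace : Tendsto (fun t : ℝ => t ^ α * ∫ x : ℝ, Real.exp (-t * x) ∂μ.measure)
      (nhdsWithin 0 (Set.Ioi 0)) (nhds 1))
    {a b : ℝ} (ha : 0 < a) (hab : a < b) :
    Tendsto (fun t : ℝ => t ^ α * ∫ x : ℝ, ktTrap a b (t * x) ∂μ.measure)
      (nhdsWithin 0 (Set.Ioi 0))
      (nhds ((Real.Gamma α)⁻¹ * ∫ x in Ioi (0:ℝ), ktTrap a b x * x ^ (α - 1))) := by
  rw [Metric.tendsto_nhds]
  intro ε hε
  set L : ℝ := (Real.Gamma α)⁻¹ * ∫ x in Ioi (0:ℝ), ktTrap a b x * x ^ (α - 1) with hL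
  set ε' : ℝ := ε / 5 with hε'def
  have hε' : 0 < ε' := by positivity
  obtain ⟨p, hp⟩ := exists_polynomial_near_of_continuousOn 0 1 (ktQ a b) (ktQ_contOn ha hab) ε' hε'
  set n := p.natDegree + 1 with hn
  set c : ℕ → ℝ := fun k => p.coeff k with hc
  set P : ℝ → ℝ := fun x => ∑ k ∈ Finset.range n, c k * Real.exp (-((k:ℝ)+1) * x) with hP
  have hGpos := Real.Gamma_pos_of_pos hα
  -- (F1) pointwise approximation
  have hF1 : ∀ x : ℝ, 0 ≤ x → |ktTrap a b x - P x| ≤ ε' * Real.exp (-x) := by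
    intro x hx
    set u := Real.exp (-x) with hu
    have hu0 : 0 < u := Real.exp_pos _
    have hu1 : u ≤ 1 := Real.exp_le_one_iff.2 (by linarith)
    have hPu : P x = u * p.eval u := by
      simp only [hP]
      rw [Polynomial.eval_eq_sum_range, Finset.mul_sum]
      refine Finset.sum_congr rfl fun k _ => ?_
      have hexp : Real.exp (-((k:ℝ)+1) * x) = u ^ (k+1) := by
        rw [hu, ← Real.exp_nat_mul]
        congr 1; push_cast; ring
      rw [hexp, pow_succ]; ring
    have hTu : ktTrap a b x = u * ktQ a b u := ktTrap_eq_exp_mul a b x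
    have hqp := hp u ⟨hu0.le, hu1⟩
    rw [hTu, hPu, ← mul_sub, abs_mul, abs_of_nonneg hu0.le]
    calc u * |ktQ a b u - p.eval u| = |p.eval u - ktQ a b u| * u := by rw [abs_sub_comm]; ring
      _ ≤ ε' * u := mul_le_mul_of_nonneg_right hqp.le hu0.le
      _ = ε' * Real.exp (-x) := by rw [hu]
  -- integrability (μ side)
  have hPInt : ∀ t : ℝ, 0 < t → Integrable (fun x => P (t * x)) μ.measure := by
    intro t ht
    simp only [hP]
    apply integrable_finset_sum
    intro k _
    have h1 : (fun x : ℝ => Real.exp (-((k:ℝ)+1) * (t * x)))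
        = (fun x : ℝ => Real.exp (-(((k:ℝ)+1) * t) * x)) := by
      funext x; congr 1; ring
    have h2 := hint (((k:ℝ)+1) * t) (by positivity)
    rw [← h1] at h2
    exact h2.const_mul (c k)
  have hTInt : ∀ t : ℝ, 0 < t → Integrable (fun x => ktTrap a b (t * x)) μ.measure := by
    intro t ht
    apply Integrable.mono' ((hint t ht).const_mul (Real.exp b))
    · exact ((ktTrap_continuous a b).comp (continuous_const.mul continuous_id)).aestronglyMeasurable
    · apply Filter.Eventually.of_forall
      intro x
      rw [Real.norm_eq_abs, abs_of_nonneg (ktTrap_nonneg _ _ _)]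
      calc ktTrap a b (t*x) ≤ Real.exp b * Real.exp (-(t*x)) := ktTrap_le_exp hab _
        _ = Real.exp b * Real.exp (-t*x) := by rw [neg_mul]
  have hae := kt_ae_pos μ hzero
  -- (F4): polynomial part limit
  set S : ℝ := ∑ k ∈ Finset.range n, c k * ((k:ℝ)+1) ^ (-α) with hS
  have hF4 : Tendsto (fun t : ℝ => t ^ α * ∫ x, P (t * x) ∂μ.measure)
      (nhdsWithin 0 (Set.Ioi 0)) (nhds S) := by
    have hterm : ∀ k ∈ Finset.range n,
        Tendsto (fun t : ℝ => c k * (t ^ α * ∫ x, Real.exp (-(((k:ℝ)+1) * t) * x) ∂μ.measure))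
          (nhdsWithin 0 (Set.Ioi 0)) (nhds (c k * (((k:ℝ)+1) ^ (-α)))) :=
      fun k _ => (kt_M1 μ α hlaplace (by positivity)).const_mul (c k)
    have hsum := tendsto_finset_sum (Finset.range n) hterm
    apply hsum.congr'
    filter_upwards [self_mem_nhdsWithin] with t ht
    have ht' : (0:ℝ) < t := ht
    calc ∑ k ∈ Finset.range n, c k * (t ^ α * ∫ x, Real.exp (-(((k:ℝ)+1) * t) * x) ∂μ.measure)
        = t ^ α * ∑ k ∈ Finset.range n, ∫ x, c k * Real.exp (-(((k:ℝ)+1) * t) * x) ∂μ.measure := by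
          rw [Finset.mul_sum]
          refine Finset.sum_congr rfl fun k _ => ?_
          rw [integral_const_mul]; ring
      _ = t ^ α * ∫ x, ∑ k ∈ Finset.range n, c k * Real.exp (-(((k:ℝ)+1) * t) * x) ∂μ.measure := by
          rw [integral_finset_sum _ (fun (k : ℕ) _ => (hint (((k:ℝ)+1) * t) (by positivity)).const_mul (c k))]
      _ = t ^ α * ∫ x, P (t * x) ∂μ.measure := by
          congr 1
          refine integral_congr_ae (Filter.Eventually.of_forall fun x => ?_)
          simp only [hP]
          refine Finset.sum_congr rfl fun k _ => ?_
          congr 2; ring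
  -- (F5): |S - L| ≤ ε'
  have hPint : ∀ k ∈ Finset.range n,
      IntegrableOn (fun x : ℝ => c k * (x ^ (α-1) * Real.exp (-(((k:ℝ)+1) * x)))) (Ioi 0) :=
    fun k _ => (kt_W hα (by positivity)).const_mul _
  have h1 : (fun x : ℝ => P x * x ^ (α-1))
      = fun x => ∑ k ∈ Finset.range n, c k * (x ^ (α-1) * Real.exp (-(((k:ℝ)+1) * x))) := by
    funext x; simp only [hP]
    rw [Finset.sum_mul]
    refine Finset.sum_congr rfl fun k _ => ?_
    rw [neg_mul]; ring
  have hPintOn : IntegrableOn (fun x : ℝ => P x * x ^ (α-1)) (Ioi 0) := by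
    rw [h1]; exact integrable_finset_sum _ hPint
  have hTIntOn := kt_trap_intOn hα hab
  have hSI : |S - L| ≤ ε' := by
    have hPIoi : ∫ x in Ioi (0:ℝ), P x * x ^ (α-1)
        = ∑ k ∈ Finset.range n, c k * ((((k:ℝ)+1)) ^ (-α) * Real.Gamma α) := by
      rw [h1, integral_finset_sum _ hPint]
      refine Finset.sum_congr rfl fun k _ => ?_
      rw [integral_const_mul, kt_gamma_int hα (by positivity)]
    have hSeq : S = (Real.Gamma α)⁻¹ * ∫ x in Ioi (0:ℝ), P x * x ^ (α-1) := by
      rw [hPIoi, Finset.mul_sum, hS]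
      refine Finset.sum_congr rfl fun k _ => ?_
      field_simp [hGpos.ne']
    have hbound : |∫ x in Ioi (0:ℝ), (P x * x ^ (α-1) - ktTrap a b x * x ^ (α-1))| ≤ ε' * Real.Gamma α := by
      calc |∫ x in Ioi (0:ℝ), (P x * x ^ (α-1) - ktTrap a b x * x ^ (α-1))|
          ≤ ∫ x in Ioi (0:ℝ), |P x * x ^ (α-1) - ktTrap a b x * x ^ (α-1)| := by
            simpa [Real.norm_eq_abs] using
              norm_integral_le_integral_norm (μ := volume.restrict (Ioi 0))
                (fun x : ℝ => P x * x ^ (α-1) - ktTrap a b x * x ^ (α-1))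
        _ ≤ ∫ x in Ioi (0:ℝ), ε' * (x ^ (α-1) * Real.exp (-(1*x))) := by
            apply integral_mono_ae ((hPintOn.sub hTIntOn).abs) ((kt_W hα one_pos).const_mul ε')
            filter_upwards [self_mem_ae_restrict measurableSet_Ioi] with x hx
            have hx0 : (0:ℝ) < x := hx
            have h2 : |P x - ktTrap a b x| ≤ ε' * Real.exp (-x) := by
              rw [abs_sub_comm]; exact hF1 x hx0.le
            calc |P x * x ^ (α-1) - ktTrap a b x * x ^ (α-1)|
                = |P x - ktTrap a b x| * x ^ (α-1) := by
                  rw [← sub_mul, abs_mul, abs_of_nonneg (Real.rpow_nonneg hx0.le _)]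
              _ ≤ (ε' * Real.exp (-x)) * x ^ (α-1) :=
                  mul_le_mul_of_nonneg_right h2 (Real.rpow_nonneg hx0.le _)
              _ = ε' * (x ^ (α-1) * Real.exp (-(1*x))) := by rw [one_mul]; ring
        _ = ε' * ((1:ℝ) ^ (-α) * Real.Gamma α) := by rw [integral_const_mul, kt_gamma_int hα one_pos]
        _ = ε' * Real.Gamma α := by rw [Real.one_rpow, one_mul]
    rw [hSeq, hL, ← mul_sub, abs_mul, abs_of_nonneg (inv_nonneg.2 hGpos.le),
      ← integral_sub hPintOn hTIntOn]
    calc (Real.Gamma α)⁻¹ * |∫ x in Ioi (0:ℝ), (P x * x ^ (α-1) - ktTrap a b x * x ^ (α-1))|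
        ≤ (Real.Gamma α)⁻¹ * (ε' * Real.Gamma α) :=
          mul_le_mul_of_nonneg_left hbound (inv_nonneg.2 hGpos.le)
      _ = ε' := by field_simp
  -- eventually statements
  have hev1 : ∀ᶠ t in nhdsWithin (0:ℝ) (Set.Ioi 0),
      t ^ α * ∫ x, Real.exp (-t*x) ∂μ.measure < 2 :=
    hlaplace.eventually_lt_const one_lt_two
  filter_upwards [hev1, Metric.tendsto_nhds.mp hF4 ε' hε', self_mem_nhdsWithin] with t h2F hPF ht
  have ht' : (0:ℝ) < t := ht
  rw [Real.dist_eq] at hPF ⊢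
  have hTP : |(t ^ α * ∫ x, ktTrap a b (t*x) ∂μ.measure) - t ^ α * ∫ x, P (t*x) ∂μ.measure|
      ≤ ε' * (t ^ α * ∫ x, Real.exp (-t*x) ∂μ.measure) := by
    rw [← mul_sub, ← integral_sub (hTInt t ht') (hPInt t ht'), abs_mul,
      abs_of_nonneg (Real.rpow_nonneg ht'.le α)]
    have hab1 : |∫ x, (ktTrap a b (t*x) - P (t*x)) ∂μ.measure|
        ≤ ∫ x, ε' * Real.exp (-t*x) ∂μ.measure := by
      calc |∫ x, (ktTrap a b (t*x) - P (t*x)) ∂μ.measure|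
          ≤ ∫ x, |ktTrap a b (t*x) - P (t*x)| ∂μ.measure := by
            simpa [Real.norm_eq_abs] using
              norm_integral_le_integral_norm (μ := μ.measure)
                (fun x : ℝ => ktTrap a b (t*x) - P (t*x))
        _ ≤ ∫ x, ε' * Real.exp (-t*x) ∂μ.measure := by
            apply integral_mono_ae (((hTInt t ht').sub (hPInt t ht')).abs)
              ((hint t ht').const_mul ε')
            filter_upwards [hae] with x hx
            have h3 := hF1 (t*x) (by positivity)
            calc |ktTrap a b (t*x) - P (t*x)| ≤ ε' * Real.exp (-(t*x)) := h3
              _ = ε' * Real.exp (-t*x) := by rw [neg_mul]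
    calc t ^ α * |∫ x, (ktTrap a b (t*x) - P (t*x)) ∂μ.measure|
        ≤ t ^ α * ∫ x, ε' * Real.exp (-t*x) ∂μ.measure :=
          mul_le_mul_of_nonneg_left hab1 (Real.rpow_nonneg ht'.le α)
      _ = ε' * (t ^ α * ∫ x, Real.exp (-t*x) ∂μ.measure) := by rw [integral_const_mul]; ring
  have h2F' : ε' * (t ^ α * ∫ x, Real.exp (-t*x) ∂μ.measure) ≤ ε' * 2 :=
    mul_le_mul_of_nonneg_left h2F.le hε'.le
  have htri : |(t ^ α * ∫ x, ktTrap a b (t*x) ∂μ.measure) - L|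
      ≤ |(t ^ α * ∫ x, ktTrap a b (t*x) ∂μ.measure) - t ^ α * ∫ x, P (t*x) ∂μ.measure|
        + |(t ^ α * ∫ x, P (t*x) ∂μ.measure) - S| + |S - L| := by
    have := abs_sub_le (t ^ α * ∫ x, ktTrap a b (t*x) ∂μ.measure)
      (t ^ α * ∫ x, P (t*x) ∂μ.measure) L
    have h4 := abs_sub_le (t ^ α * ∫ x, P (t*x) ∂μ.measure) S L
    linarith
  have : |(t ^ α * ∫ x, ktTrap a b (t*x) ∂μ.measure) - L| < ε' * 2 + ε' + ε' := by
    linarith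
  calc |(t ^ α * ∫ x, ktTrap a b (t*x) ∂μ.measure) - L| < ε' * 2 + ε' + ε' := this
    _ < ε := by rw [hε'def]; linarith

lemma kt_rpow_intOn_Ioc {α : ℝ} (hα : 0 < α) {c : ℝ} (hc : 0 < c) :
    IntegrableOn (fun x : ℝ => x ^ (α - 1)) (Ioc 0 c) := by
  rw [← intervalIntegrable_iff_integrableOn_Ioc_of_le hc.le]
  exact intervalIntegral.intervalIntegrable_rpow' (by linarith)

lemma kt_I_lower {α : ℝ} (hα : 0 < α) {a b : ℝ} (ha : 0 < a) (hab : a < b) :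
    a ^ α / Real.Gamma (α + 1)
      ≤ (Real.Gamma α)⁻¹ * ∫ x in Ioi (0:ℝ), ktTrap a b x * x ^ (α - 1) := by
  have hGpos := Real.Gamma_pos_of_pos hα
  have h1 : ∫ x in Ioc (0:ℝ) a, x ^ (α-1) ≤ ∫ x in Ioi (0:ℝ), ktTrap a b x * x ^ (α-1) := by
    have h2 : ∫ x in Ioc (0:ℝ) a, x ^ (α-1) = ∫ x in Ioc (0:ℝ) a, ktTrap a b x * x ^ (α-1) := by
      refine (setIntegral_congr_fun measurableSet_Ioc fun x hx => ?_).symm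
      rw [ktTrap_eq_one hab hx.2, one_mul]
    rw [h2]
    apply setIntegral_mono_set (kt_trap_intOn hα hab)
    · filter_upwards [self_mem_ae_restrict measurableSet_Ioi] with x hx using
        mul_nonneg (ktTrap_nonneg _ _ _) (Real.rpow_nonneg (le_of_lt hx) _)
    · exact HasSubset.Subset.eventuallyLE Ioc_subset_Ioi_self
  rw [kt_rpow_Ioc hα ha, Real.Gamma_add_one hα.ne'] at *
  have h3 : (Real.Gamma α)⁻¹ * (a ^ α / α) = a ^ α / (α * Real.Gamma α) := by
    rw [mul_comm, ← div_eq_mul_inv, div_div]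
  rw [← h3]
  exact mul_le_mul_of_nonneg_left h1 (inv_nonneg.2 hGpos.le)

lemma kt_I_upper {α : ℝ} (hα : 0 < α) {a b : ℝ} (ha : 0 < a) (hab : a < b) :
    (Real.Gamma α)⁻¹ * ∫ x in Ioi (0:ℝ), ktTrap a b x * x ^ (α - 1)
      ≤ b ^ α / Real.Gamma (α + 1) := by
  have hGpos := Real.Gamma_pos_of_pos hα
  have hb : 0 < b := ha.trans hab
  have hsplit := setIntegral_union (μ := volume) (f := fun x : ℝ => ktTrap a b x * x ^ (α-1))
    (Ioc_disjoint_Ioi le_rfl) measurableSet_Ioi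
    ((kt_trap_intOn hα hab).mono_set Ioc_subset_Ioi_self)
    ((kt_trap_intOn hα hab).mono_set (Ioi_subset_Ioi hb.le))
  rw [Ioc_union_Ioi_eq_Ioi hb.le] at hsplit
  have hzero2 : ∫ x in Ioi b, ktTrap a b x * x ^ (α-1) = 0 := by
    rw [setIntegral_congr_fun measurableSet_Ioi
      (fun x hx => by rw [ktTrap_eq_zero hab (le_of_lt hx), zero_mul])]
    exact integral_zero _ _
  have hmono : ∫ x in Ioc (0:ℝ) b, ktTrap a b x * x ^ (α-1) ≤ ∫ x in Ioc (0:ℝ) b, x ^ (α-1) := by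
    apply setIntegral_mono_on ((kt_trap_intOn hα hab).mono_set Ioc_subset_Ioi_self)
      (kt_rpow_intOn_Ioc hα hb) measurableSet_Ioc
    intro x hx
    exact mul_le_of_le_one_left (Real.rpow_nonneg hx.1.le _) (ktTrap_le_one _ _ _)
  rw [kt_rpow_Ioc hα hb] at hmono
  have h4 : ∫ x in Ioi (0:ℝ), ktTrap a b x * x ^ (α-1) ≤ b ^ α / α := by
    rw [hsplit, hzero2, add_zero]; exact hmono
  rw [Real.Gamma_add_one hα.ne']
  calc (Real.Gamma α)⁻¹ * ∫ x in Ioi (0:ℝ), ktTrap a b x * x ^ (α-1)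
      ≤ (Real.Gamma α)⁻¹ * (b ^ α / α) :=
        mul_le_mul_of_nonneg_left h4 (inv_nonneg.2 hGpos.le)
    _ = b ^ α / (α * Real.Gamma α) := by rw [mul_comm, ← div_eq_mul_inv, div_div]

lemma kt_trap_integrable (μ : StieltjesFunction ℝ)
    (hint : ∀ t : ℝ, 0 < t → Integrable (fun x : ℝ => Real.exp (-t * x)) μ.measure)
    {a b : ℝ} (hab : a < b) {t : ℝ} (ht : 0 < t) :
    Integrable (fun x => ktTrap a b (t * x)) μ.measure := by
  apply Integrable.mono' ((hint t ht).const_mul (Real.exp b))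
  · exact ((ktTrap_continuous a b).comp (continuous_const.mul continuous_id)).aestronglyMeasurable
  · apply Filter.Eventually.of_forall
    intro x
    rw [Real.norm_eq_abs, abs_of_nonneg (ktTrap_nonneg _ _ _)]
    calc ktTrap a b (t*x) ≤ Real.exp b * Real.exp (-(t*x)) := ktTrap_le_exp hab _
      _ = Real.exp b * Real.exp (-t*x) := by rw [neg_mul]

set_option maxHeartbeats 1000000 in
lemma kt_main_pos (μ : StieltjesFunction ℝ) {α : ℝ} (hα : 0 < α)
    (hzero : ∀ x : ℝ, x ≤ 0 → μ x = 0)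
    (hnonneg : ∀ x : ℝ, 0 ≤ μ x)
    (hint : ∀ t : ℝ, 0 < t → Integrable (fun x : ℝ => Real.exp (-t * x)) μ.measure)
    (hlaplace : Tendsto (fun t : ℝ => t ^ α * ∫ x : ℝ, Real.exp (-t * x) ∂μ.measure)
      (nhdsWithin 0 (Set.Ioi 0)) (nhds 1)) :
    Tendsto (fun l : ℝ => μ l * l ^ (-α)) atTop (nhds (1 / Real.Gamma (α + 1))) := by
  have hG1pos : 0 < Real.Gamma (α + 1) := Real.Gamma_pos_of_pos (by linarith)
  set L : ℝ := 1 / Real.Gamma (α + 1) with hLdef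
  have hLpos : 0 < L := by positivity
  have hB : Tendsto (fun t : ℝ => t ^ α * μ t⁻¹) (nhdsWithin 0 (Set.Ioi 0)) (nhds L) := by
    rw [Metric.tendsto_nhds]
    intro ε hε
    set η := ε / 2 / L with hηdef
    have hη : 0 < η := by positivity
    have hηL : η * L = ε / 2 := by
      rw [hηdef]; field_simp
    have hc1 : ContinuousAt (fun d : ℝ => (1 + d) ^ α) 0 :=
      ContinuousAt.rpow_const ((continuous_const.add continuous_id).continuousAt)
        (Or.inl (by norm_num))
    have hc2 : ContinuousAt (fun d : ℝ => (1 - d) ^ α) 0 :=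
      ContinuousAt.rpow_const ((continuous_const.sub continuous_id).continuousAt)
        (Or.inl (by norm_num))
    have he1 : ∀ᶠ d in nhds (0:ℝ), dist ((1 + d) ^ α) ((1 + (0:ℝ)) ^ α) < η :=
      Metric.tendsto_nhds.mp hc1.tendsto η hη
    have he2 : ∀ᶠ d in nhds (0:ℝ), dist ((1 - d) ^ α) ((1 - (0:ℝ)) ^ α) < η :=
      Metric.tendsto_nhds.mp hc2.tendsto η hη
    have he3 : ∀ᶠ d in nhds (0:ℝ), d ∈ Ioo (-1:ℝ) 1 :=
      Ioo_mem_nhds (by norm_num) (by norm_num)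
    have hall : ∀ᶠ d in nhdsWithin (0:ℝ) (Set.Ioi 0),
        (dist ((1 + d) ^ α) ((1 + (0:ℝ)) ^ α) < η ∧ dist ((1 - d) ^ α) ((1 - (0:ℝ)) ^ α) < η
          ∧ d ∈ Ioo (-1:ℝ) 1) ∧ d ∈ Ioi (0:ℝ) :=
      ((he1.and (he2.and he3)).filter_mono nhdsWithin_le_nhds).and eventually_mem_nhdsWithin
    obtain ⟨δ, ⟨hd1, hd2, hd3⟩, hδ0⟩ := hall.exists
    have hδpos : (0:ℝ) < δ := hδ0
    have hδlt1 : δ < 1 := hd3.2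
    simp only [add_zero, sub_zero, Real.one_rpow, Real.dist_eq] at hd1 hd2
    -- the two key limits
    have hkm := kt_key μ hα hzero hint hlaplace (a := 1 - δ) (b := 1)
      (by linarith) (by linarith)
    have hkp := kt_key μ hα hzero hint hlaplace (a := 1) (b := 1 + δ)
      one_pos (by linarith)
    set Im : ℝ := (Real.Gamma α)⁻¹ * ∫ x in Ioi (0:ℝ), ktTrap (1 - δ) 1 x * x ^ (α - 1) with hIm
    set Ip : ℝ := (Real.Gamma α)⁻¹ * ∫ x in Ioi (0:ℝ), ktTrap 1 (1 + δ) x * x ^ (α - 1) with hIp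
    -- bounds on the limits
    have hImge : (1 - δ) ^ α * L ≤ Im := by
      have := kt_I_lower hα (a := 1 - δ) (b := 1) (by linarith) (by linarith)
      rw [div_eq_mul_one_div] at this
      exact this
    have hIple : Ip ≤ (1 + δ) ^ α * L := by
      have := kt_I_upper hα (a := 1) (b := 1 + δ) one_pos (by linarith)
      rw [div_eq_mul_one_div] at this
      exact this
    have hImgt : L - ε / 2 < Im := by
      have h5 : (1 - ((1 - δ) ^ α)) * L < η * L :=
        mul_lt_mul_of_pos_right (by cases abs_sub_lt_iff.1 hd2; linarith) hLpos
      rw [hηL] at h5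
      nlinarith
    have hIplt : Ip < L + ε / 2 := by
      have h5 : (((1 + δ) ^ α) - 1) * L < η * L :=
        mul_lt_mul_of_pos_right (by cases abs_sub_lt_iff.1 hd1; linarith) hLpos
      rw [hηL] at h5
      nlinarith
    -- squeeze
    have hsq : ∀ᶠ t in nhdsWithin (0:ℝ) (Set.Ioi 0),
        (t ^ α * ∫ x, ktTrap (1 - δ) 1 (t * x) ∂μ.measure) ≤ t ^ α * μ t⁻¹
        ∧ t ^ α * μ t⁻¹ ≤ t ^ α * ∫ x, ktTrap 1 (1 + δ) (t * x) ∂μ.measure := by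
      filter_upwards [self_mem_nhdsWithin] with t ht
      have ht' : (0:ℝ) < t := ht
      have hmul1 : t * t⁻¹ = 1 := mul_inv_cancel₀ ht'.ne'
      have hμeq : (μ t⁻¹ : ℝ) = ∫ x, (Iic t⁻¹).indicator (fun _ => (1:ℝ)) x ∂μ.measure :=
        (kt_integral_indicator μ hzero hnonneg t⁻¹).symm
      constructor
      · rw [hμeq]
        apply mul_le_mul_of_nonneg_left _ (Real.rpow_nonneg ht'.le α)
        apply integral_mono (kt_trap_integrable μ hint (by linarith) ht')
          (kt_indicator_integrable μ hzero t⁻¹)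
        intro x
        beta_reduce
        by_cases hx : x ∈ Iic t⁻¹
        · rw [indicator_of_mem hx]
          exact ktTrap_le_one _ _ _
        · rw [indicator_of_notMem hx]
          have hx' : t⁻¹ < x := by simpa using hx
          have h1x : (1:ℝ) < t * x := by
            calc (1:ℝ) = t * t⁻¹ := hmul1.symm
              _ < t * x := by exact mul_lt_mul_of_pos_left hx' ht'
          rw [ktTrap_eq_zero (by linarith) h1x.le]
      · rw [hμeq]
        apply mul_le_mul_of_nonneg_left _ (Real.rpow_nonneg ht'.le α)
        apply integral_mono (kt_indicator_integrable μ hzero t⁻¹)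
          (kt_trap_integrable μ hint (by linarith) ht')
        intro x
        beta_reduce
        by_cases hx : x ∈ Iic t⁻¹
        · rw [indicator_of_mem hx]
          have hx' : x ≤ t⁻¹ := hx
          have h1x : t * x ≤ 1 := by
            calc t * x ≤ t * t⁻¹ := by exact mul_le_mul_of_nonneg_left hx' ht'.le
              _ = 1 := hmul1
          rw [ktTrap_eq_one (by linarith) h1x]
        · rw [indicator_of_notMem hx]
          exact ktTrap_nonneg _ _ _
    filter_upwards [hsq, Metric.tendsto_nhds.mp hkm (ε / 2) (by linarith),
      Metric.tendsto_nhds.mp hkp (ε / 2) (by linarith)] with t hsqt hm hp2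
    rw [Real.dist_eq] at hm hp2 ⊢
    obtain ⟨hm1, hm2⟩ := abs_sub_lt_iff.1 hm
    obtain ⟨hp21, hp22⟩ := abs_sub_lt_iff.1 hp2
    refine abs_sub_lt_iff.2 ⟨by linarith [hsqt.1, hsqt.2], by linarith [hsqt.1, hsqt.2]⟩
  -- transfer to atTop
  have hcomp := hB.comp tendsto_inv_atTop_nhdsGT_zero
  apply hcomp.congr'
  filter_upwards [eventually_gt_atTop (0:ℝ)] with l hl
  show (l⁻¹) ^ α * μ l⁻¹⁻¹ = μ l * l ^ (-α)
  rw [inv_inv, Real.inv_rpow hl.le, ← Real.rpow_neg hl.le, mul_comm]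

set_option maxHeartbeats 1000000 in
lemma kt_main_zero (μ : StieltjesFunction ℝ)
    (hzero : ∀ x : ℝ, x ≤ 0 → μ x = 0)
    (hnonneg : ∀ x : ℝ, 0 ≤ μ x)
    (hint : ∀ t : ℝ, 0 < t → Integrable (fun x : ℝ => Real.exp (-t * x)) μ.measure)
    (hlap : Tendsto (fun t : ℝ => ∫ x : ℝ, Real.exp (-t * x) ∂μ.measure)
      (nhdsWithin 0 (Set.Ioi 0)) (nhds 1)) :
    Tendsto (fun l : ℝ => (μ l : ℝ)) atTop (nhds 1) := by
  set F : ℝ → ℝ := fun t => ∫ x, Real.exp (-t * x) ∂μ.measure with hF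
  have hae := kt_ae_pos μ hzero
  have hFle : ∀ t : ℝ, 0 < t → F t ≤ 1 := by
    intro t ht
    refine ge_of_tendsto hlap ?_
    filter_upwards [Ioo_mem_nhdsGT_of_mem (left_mem_Ico.2 ht)] with s hs
    apply integral_mono_ae (hint t ht) (hint s hs.1)
    filter_upwards [hae] with x hx
    exact Real.exp_le_exp.2 (by nlinarith [hs.2, hx])
  have hup : ∀ l : ℝ, (μ l : ℝ) ≤ 1 := by
    intro l
    have h1 : ∀ t : ℝ, 0 < t → (μ l : ℝ) ≤ Real.exp (t * l) := by
      intro t ht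
      have h2 : (μ l : ℝ) ≤ Real.exp (t * l) * F t := by
        rw [← kt_integral_indicator μ hzero hnonneg l, hF, ← integral_const_mul]
        apply integral_mono (kt_indicator_integrable μ hzero l) ((hint t ht).const_mul _)
        intro x
        beta_reduce
        by_cases hx : x ∈ Iic l
        · rw [indicator_of_mem hx]
          rw [← Real.exp_add]
          have hxl : x ≤ l := hx
          have h0 : (0:ℝ) ≤ t * l + -t * x := by nlinarith
          calc (1:ℝ) = Real.exp 0 := Real.exp_zero.symm
            _ ≤ _ := Real.exp_le_exp.2 h0
        · rw [indicator_of_notMem hx]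
          positivity
      calc (μ l : ℝ) ≤ Real.exp (t * l) * F t := h2
        _ ≤ Real.exp (t * l) * 1 := mul_le_mul_of_nonneg_left (hFle t ht) (Real.exp_pos _).le
        _ = Real.exp (t * l) := mul_one _
    refine ge_of_tendsto (f := fun t : ℝ => Real.exp (t * l))
      (x := nhdsWithin (0:ℝ) (Set.Ioi 0)) ?_ ?_
    · have hcont : ContinuousAt (fun t : ℝ => Real.exp (t * l)) 0 :=
        (Real.continuous_exp.comp (continuous_id.mul continuous_const)).continuousAt
      have h3 : Tendsto (fun t : ℝ => Real.exp (t * l)) (nhdsWithin (0:ℝ) (Set.Ioi 0))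
          (nhds (Real.exp (0 * l))) :=
        hcont.tendsto.mono_left nhdsWithin_le_nhds
      simpa using h3
    · filter_upwards [eventually_mem_nhdsWithin] with t ht using h1 t ht
  rw [Metric.tendsto_nhds]
  intro ε hε
  obtain ⟨s, hs1, hs0⟩ : ∃ s : ℝ, 1 - ε / 2 < F s ∧ s ∈ Ioi (0:ℝ) :=
    ((hlap.eventually_const_lt (by linarith)).and eventually_mem_nhdsWithin).exists
  have hs0' : (0:ℝ) < s := hs0
  set t := s / 2 with htdef
  have ht : 0 < t := by rw [htdef]; exact half_pos hs0'
  have hlow : ∀ l : ℝ, 0 < l → F s - Real.exp (-(t * l)) ≤ (μ l : ℝ) := by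
    intro l hl
    have key : F s ≤ (μ l : ℝ) + Real.exp (-(t * l)) * F t := by
      rw [← kt_integral_indicator μ hzero hnonneg l, hF, ← integral_const_mul,
        ← integral_add (kt_indicator_integrable μ hzero l) ((hint t ht).const_mul _)]
      apply integral_mono_ae (hint s hs0)
        ((kt_indicator_integrable μ hzero l).add ((hint t ht).const_mul _))
      filter_upwards [hae] with x hx
      simp only [Pi.add_apply]
      by_cases hxl : x ≤ l
      · rw [indicator_of_mem (mem_Iic.2 hxl)]
        have he1 : Real.exp (-s * x) ≤ 1 := Real.exp_le_one_iff.2 (by nlinarith [hs0])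
        have he2 : (0:ℝ) ≤ Real.exp (-(t * l)) * Real.exp (-t * x) := by positivity
        linarith
      · push_neg at hxl
        rw [indicator_of_notMem (by simpa using not_le.2 hxl)]
        rw [zero_add, ← Real.exp_add]
        apply Real.exp_le_exp.2
        have hs2t : s = 2 * t := by rw [htdef]; ring
        nlinarith [Set.mem_Ioi.1 hs0]
    have hFt1 : F t ≤ 1 := hFle t ht
    nlinarith [Real.exp_pos (-(t * l))]
  have hexp : Tendsto (fun l : ℝ => Real.exp (-(t * l))) atTop (nhds 0) := by
    have h6 : Tendsto (fun l : ℝ => t * l) atTop atTop :=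
      Tendsto.const_mul_atTop ht tendsto_id
    exact Real.tendsto_exp_neg_atTop_nhds_zero.comp h6
  filter_upwards [eventually_gt_atTop (0:ℝ), hexp.eventually_lt_const (by linarith : (0:ℝ) < ε/2)]
    with l hl hexpl
  rw [Real.dist_eq]
  exact abs_sub_lt_iff.2 ⟨by linarith [hup l], by linarith [hlow l hl]⟩

end KaramataAux

/-- **Karamata's Tauberian theorem.**
Let `μ : [0,∞) → ℝ` be non-negative, non-decreasing and right-continuous with `μ(0) = 0`
(modeled as a Stieltjes function on `ℝ` vanishing on `(-∞,0]`), and let `α ≥ 0`. If the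
Laplace transform `μ̂(t) = ∫₀^∞ e^{-tλ} dμ(λ)` is finite for every `t > 0` and
`t^α μ̂(t) → 1` as `t → 0⁺`, then `μ(λ) λ^{-α} → 1/Γ(α+1)` as `λ → ∞`. -/
theorem karamata_tauberian (μ : StieltjesFunction ℝ) (α : ℝ) (hα : 0 ≤ α)
    (hzero : ∀ x : ℝ, x ≤ 0 → μ x = 0)
    (hnonneg : ∀ x : ℝ, 0 ≤ μ x)
    (hint : ∀ t : ℝ, 0 < t → Integrable (fun x : ℝ => Real.exp (-t * x)) μ.measure)
    (hlaplace : Tendsto (fun t : ℝ => t ^ α * ∫ x : ℝ, Real.exp (-t * x) ∂μ.measure)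
      (nhdsWithin 0 (Set.Ioi 0)) (nhds 1)) :
    Tendsto (fun l : ℝ => μ l * l ^ (-α)) atTop (nhds (1 / Real.Gamma (α + 1))) := by
  rcases eq_or_lt_of_le hα with h0 | hpos
  · subst h0
    have hlap' : Tendsto (fun t : ℝ => ∫ x : ℝ, Real.exp (-t * x) ∂μ.measure)
        (nhdsWithin 0 (Set.Ioi 0)) (nhds 1) := by
      simpa [Real.rpow_zero] using hlaplace
    have h1 := kt_main_zero μ hzero hnonneg hint hlap'
    simpa [Real.Gamma_one, neg_zero, Real.rpow_zero] using h1
  · exact kt_main_pos μ hpos hzero hnonneg hint hlaplace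
end

section
/- Let υ : (0,∞) → (0,∞) be a slowly varying function of class C¹ such that λ ↦ λ^a υ′(λ) is monotone for some a ≥ 0. Then λ υ′(λ)/υ(λ) → 0 as λ → ∞. -/
open Filter

/-- Let `υ : (0,∞) → (0,∞)` be a slowly varying function of class `C¹` such that
`λ ↦ λ^a υ′(λ)` is monotone for some `a ≥ 0`. Then `λ υ′(λ)/υ(λ) → 0` as `λ → ∞`. -/
theorem slowly_varying_deriv_ratio (υ : ℝ → ℝ)
    (hpos : ∀ l : ℝ, 0 < l → 0 < υ l)
    (hC1 : ContDiffOn ℝ 1 υ (Set.Ioi 0))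
    (hslow : ∀ a : ℝ, 0 < a →
      Tendsto (fun l : ℝ => υ (a * l) / υ l) atTop (nhds 1))
    (hmono : ∃ a : ℝ, 0 ≤ a ∧
      (MonotoneOn (fun l : ℝ => l ^ a * deriv υ l) (Set.Ioi 0) ∨
       AntitoneOn (fun l : ℝ => l ^ a * deriv υ l) (Set.Ioi 0))) :
    Tendsto (fun l : ℝ => l * deriv υ l / υ l) atTop (nhds 0) := by
  obtain ⟨a, ha, hm⟩ := hmono
  set K : ℝ := (2 : ℝ) ^ a + 2 with hK
  have h2a : (0:ℝ) < (2:ℝ) ^ a := Real.rpow_pos_of_pos two_pos a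
  have hKpos : (0:ℝ) < K := by positivity
  have h2aK : (2:ℝ) ^ a ≤ K := by simp [hK]
  have h2K : (2:ℝ) ≤ K := by nlinarith
  have hcont : ContinuousOn υ (Set.Ioi 0) := hC1.continuousOn
  have hdiff : DifferentiableOn ℝ υ (Set.Ioi 0) := hC1.differentiableOn one_ne_zero
  -- the squeezing function
  set U : ℝ → ℝ := fun l => K * (|υ (2 * l) / υ l - 1| + |υ ((1/2) * l) / υ l - 1|) with hU
  have hU0 : Tendsto U atTop (nhds 0) := by
    have t1 : Tendsto (fun l : ℝ => |υ (2 * l) / υ l - 1|) atTop (nhds 0) := by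
      have := ((hslow 2 two_pos).sub_const 1).abs
      simpa using this
    have t2 : Tendsto (fun l : ℝ => |υ ((1/2) * l) / υ l - 1|) atTop (nhds 0) := by
      have := ((hslow (1/2) (by norm_num)).sub_const 1).abs
      simpa using this
    have := (t1.add t2).const_mul K
    simpa [hU, one_div] using this
  refine squeeze_zero_norm' ?_ hU0
  filter_upwards [eventually_gt_atTop (0:ℝ)] with l hl
  have hul : 0 < υ l := hpos l hl
  have hl2 : (0:ℝ) < l / 2 := by linarith
  -- MVT on [l, 2l]
  obtain ⟨c, hc, hcder⟩ := exists_deriv_eq_slope υ (show l < 2 * l by linarith)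
    (hcont.mono (by intro x hx; exact lt_of_lt_of_le hl hx.1))
    (hdiff.mono (by intro x hx; exact lt_trans hl hx.1))
  have hcpos : 0 < c := lt_trans hl hc.1
  have hcR : l * deriv υ c = υ (2 * l) - υ l := by
    rw [hcder, show (2 * l - l) = l by ring]
    field_simp
  -- MVT on [l/2, l]
  obtain ⟨d, hd, hdder⟩ := exists_deriv_eq_slope υ (show l / 2 < l by linarith)
    (hcont.mono (by intro x hx; exact lt_of_lt_of_le hl2 hx.1))
    (hdiff.mono (by intro x hx; exact lt_trans hl2 hx.1))
  have hdpos : 0 < d := lt_trans hl2 hd.1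
  have hdR : l * deriv υ d = 2 * (υ l - υ (l / 2)) := by
    rw [hdder, show (l - l / 2) = l / 2 by ring]
    field_simp
  -- rpow facts
  have hla : (0:ℝ) < l ^ a := Real.rpow_pos_of_pos hl a
  have hca : (0:ℝ) < c ^ a := Real.rpow_pos_of_pos hcpos a
  have hda : (0:ℝ) < d ^ a := Real.rpow_pos_of_pos hdpos a
  have hcle : c ^ a ≤ (2 * l) ^ a := Real.rpow_le_rpow hcpos.le hc.2.le ha
  have hdle : d ^ a ≤ l ^ a := Real.rpow_le_rpow hdpos.le hd.2.le ha
  have h2l : (2 * l) ^ a = 2 ^ a * l ^ a := Real.mul_rpow (by norm_num) hl.le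
  -- abs bound pieces
  have habs1 : υ (2 * l) / υ l - 1 ≤ |υ (2 * l) / υ l - 1| := le_abs_self _
  have habs1' : -|υ (2 * l) / υ l - 1| ≤ υ (2 * l) / υ l - 1 := neg_abs_le _
  have habs2 : υ (l / 2) / υ l - 1 ≤ |υ ((1/2) * l) / υ l - 1| := by
    rw [show (1/2 : ℝ) * l = l / 2 by ring]; exact le_abs_self _
  have habs2' : -|υ ((1/2) * l) / υ l - 1| ≤ υ (l / 2) / υ l - 1 := by
    rw [show (1/2 : ℝ) * l = l / 2 by ring]; exact neg_abs_le _
  set A : ℝ := |υ (2 * l) / υ l - 1|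
  set B : ℝ := |υ ((1/2) * l) / υ l - 1|
  have hAB : 0 ≤ A ∧ 0 ≤ B := ⟨abs_nonneg _, abs_nonneg _⟩
  rw [Real.norm_eq_abs, abs_le]
  have key1 : υ (2 * l) / υ l - 1 = (υ (2 * l) - υ l) / υ l := by field_simp
  have key2 : υ (l / 2) / υ l - 1 = (υ (l / 2) - υ l) / υ l := by field_simp
  constructor
  · -- lower bound: -U l ≤ l * deriv υ l / υ l
    rcases le_or_gt 0 (deriv υ l) with hs | hs
    · have : 0 ≤ l * deriv υ l / υ l := by positivity
      have hUnn : 0 ≤ U l := by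
        have : (0:ℝ) ≤ A + B := by linarith [hAB.1, hAB.2]
        exact mul_nonneg hKpos.le this
      linarith
    · rcases hm with hmon | hant
      · -- monotone case: use d on the left
        have hgm : d ^ a * deriv υ d ≤ l ^ a * deriv υ l := hmon (Set.mem_Ioi.mpr hdpos) (Set.mem_Ioi.mpr hl) hd.2.le
        -- d^a * υ' d ≤ l^a * υ' l < 0, so υ' d < 0
        have hdneg : deriv υ d < 0 := by
          by_contra hcon
          push_neg at hcon
          have p1 : 0 ≤ d ^ a * deriv υ d := mul_nonneg hda.le hcon
          have p2 : l ^ a * deriv υ l < 0 := mul_neg_of_pos_of_neg hla hs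
          linarith
        -- d^a υ' d ≥ l^a υ' d since d^a ≤ l^a and υ' d < 0
        have h1 : l ^ a * deriv υ d ≤ d ^ a * deriv υ d :=
          mul_le_mul_of_nonpos_right hdle hdneg.le
        have h2 : deriv υ d ≤ deriv υ l := le_of_mul_le_mul_left (h1.trans hgm) hla
        have h3 : 2 * (υ l - υ (l / 2)) ≤ l * deriv υ l := by
          have := mul_le_mul_of_nonneg_left h2 hl.le
          linarith
        -- so r l ≥ 2 * (1 - υ(l/2)/υ l) = -2 * (υ(l/2)/υ l - 1) ≥ -2 * B ≥ -U
        have h4 : 2 * (υ l - υ (l / 2)) / υ l ≤ l * deriv υ l / υ l :=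
          div_le_div_of_nonneg_right h3 hul.le
        have h5 : 2 * (υ l - υ (l / 2)) / υ l = -(2 * ((υ (l / 2) - υ l) / υ l)) := by
          field_simp; ring
        have h6 : υ (l / 2) / υ l - 1 ≤ B := habs2
        rw [key2] at h6
        have h7 : -(2 * B) ≤ 2 * (υ l - υ (l / 2)) / υ l := by rw [h5]; linarith
        have hUB : -(U l) ≤ -(2 * B) := by
          have hUeq : U l = K * (A + B) := rfl
          rw [hUeq, neg_le_neg_iff]
          have p1 : 2 * B ≤ K * B := mul_le_mul_of_nonneg_right h2K hAB.2
          have p2 : K * B ≤ K * (A + B) := mul_le_mul_of_nonneg_left (by linarith [hAB.1]) hKpos.le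
          linarith
        linarith
      · -- antitone case: use c on the right
        have hgm : c ^ a * deriv υ c ≤ l ^ a * deriv υ l := hant (Set.mem_Ioi.mpr hl) (Set.mem_Ioi.mpr hcpos) hc.1.le
        have hcneg : deriv υ c < 0 := by
          by_contra hcon
          push_neg at hcon
          have p1 : 0 ≤ c ^ a * deriv υ c := mul_nonneg hca.le hcon
          have p2 : l ^ a * deriv υ l < 0 := mul_neg_of_pos_of_neg hla hs
          linarith
        -- c^a ≤ (2l)^a, υ' c < 0 ⇒ (2l)^a υ' c ≤ c^a υ' c ≤ l^a υ' l
        have h1 : (2 * l) ^ a * deriv υ c ≤ c ^ a * deriv υ c :=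
          mul_le_mul_of_nonpos_right hcle hcneg.le
        have h2 : 2 ^ a * deriv υ c ≤ deriv υ l := by
          have heq : l ^ a * (2 ^ a * deriv υ c) = (2 * l) ^ a * deriv υ c := by
            rw [h2l]; ring
          have h1' : l ^ a * (2 ^ a * deriv υ c) ≤ l ^ a * deriv υ l := by
            rw [heq]; exact h1.trans hgm
          exact le_of_mul_le_mul_left h1' hla
        have h3 : 2 ^ a * (υ (2 * l) - υ l) ≤ l * deriv υ l := by
          have hmm := mul_le_mul_of_nonneg_left h2 hl.le
          have heq2 : l * (2 ^ a * deriv υ c) = 2 ^ a * (υ (2 * l) - υ l) := by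
            rw [← hcR]; ring
          linarith
        have h4 : 2 ^ a * (υ (2 * l) - υ l) / υ l ≤ l * deriv υ l / υ l :=
          div_le_div_of_nonneg_right h3 hul.le
        have h6 : -A ≤ (υ (2 * l) - υ l) / υ l := by rw [← key1]; exact habs1'
        have h7 : -(2 ^ a * A) ≤ 2 ^ a * (υ (2 * l) - υ l) / υ l := by
          rw [mul_div_assoc]
          have := mul_le_mul_of_nonneg_left h6 h2a.le
          linarith
        have hUB : -(U l) ≤ -(2 ^ a * A) := by
          have hUeq : U l = K * (A + B) := rfl
          rw [hUeq, neg_le_neg_iff]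
          have p1 : 2 ^ a * A ≤ K * A := mul_le_mul_of_nonneg_right h2aK hAB.1
          have p2 : K * A ≤ K * (A + B) := mul_le_mul_of_nonneg_left (by linarith [hAB.2]) hKpos.le
          linarith
        linarith
  · -- upper bound: l * deriv υ l / υ l ≤ U l
    rcases le_or_gt (deriv υ l) 0 with hs | hs
    · have : l * deriv υ l / υ l ≤ 0 := by
        apply div_nonpos_of_nonpos_of_nonneg _ hul.le
        exact mul_nonpos_of_nonneg_of_nonpos hl.le hs
      have hUnn : 0 ≤ U l := mul_nonneg hKpos.le (by linarith [hAB.1, hAB.2])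
      linarith
    · rcases hm with hmon | hant
      · -- monotone: use c
        have hgm : l ^ a * deriv υ l ≤ c ^ a * deriv υ c := hmon (Set.mem_Ioi.mpr hl) (Set.mem_Ioi.mpr hcpos) hc.1.le
        have hcpos' : 0 < deriv υ c := by
          by_contra hcon
          push_neg at hcon
          have p1 : c ^ a * deriv υ c ≤ 0 := mul_nonpos_of_nonneg_of_nonpos hca.le hcon
          have p2 : 0 < l ^ a * deriv υ l := mul_pos hla hs
          linarith
        have h1 : c ^ a * deriv υ c ≤ (2 * l) ^ a * deriv υ c :=
          mul_le_mul_of_nonneg_right hcle hcpos'.le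
        have h2 : deriv υ l ≤ 2 ^ a * deriv υ c := by
          have heq : l ^ a * (2 ^ a * deriv υ c) = (2 * l) ^ a * deriv υ c := by
            rw [h2l]; ring
          have h1' : l ^ a * deriv υ l ≤ l ^ a * (2 ^ a * deriv υ c) := by
            rw [heq]; exact hgm.trans h1
          exact le_of_mul_le_mul_left h1' hla
        have h3 : l * deriv υ l ≤ 2 ^ a * (υ (2 * l) - υ l) := by
          have hmm := mul_le_mul_of_nonneg_left h2 hl.le
          have heq2 : l * (2 ^ a * deriv υ c) = 2 ^ a * (υ (2 * l) - υ l) := by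
            rw [← hcR]; ring
          linarith
        have h4 : l * deriv υ l / υ l ≤ 2 ^ a * (υ (2 * l) - υ l) / υ l :=
          div_le_div_of_nonneg_right h3 hul.le
        have h6 : (υ (2 * l) - υ l) / υ l ≤ A := by rw [← key1]; exact habs1
        have h7 : 2 ^ a * (υ (2 * l) - υ l) / υ l ≤ 2 ^ a * A := by
          rw [mul_div_assoc]
          exact mul_le_mul_of_nonneg_left h6 h2a.le
        have hUB : 2 ^ a * A ≤ U l := by
          have hUeq : U l = K * (A + B) := rfl
          rw [hUeq]
          have p1 : 2 ^ a * A ≤ K * A := mul_le_mul_of_nonneg_right h2aK hAB.1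
          have p2 : K * A ≤ K * (A + B) := mul_le_mul_of_nonneg_left (by linarith [hAB.2]) hKpos.le
          linarith
        linarith
      · -- antitone: use d
        have hgm : l ^ a * deriv υ l ≤ d ^ a * deriv υ d := hant (Set.mem_Ioi.mpr hdpos) (Set.mem_Ioi.mpr hl) hd.2.le
        have hdpos' : 0 < deriv υ d := by
          by_contra hcon
          push_neg at hcon
          have p1 : d ^ a * deriv υ d ≤ 0 := mul_nonpos_of_nonneg_of_nonpos hda.le hcon
          have p2 : 0 < l ^ a * deriv υ l := mul_pos hla hs
          linarith
        have h1 : d ^ a * deriv υ d ≤ l ^ a * deriv υ d :=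
          mul_le_mul_of_nonneg_right hdle hdpos'.le
        have h2 : deriv υ l ≤ deriv υ d := le_of_mul_le_mul_left (hgm.trans h1) hla
        have h3 : l * deriv υ l ≤ 2 * (υ l - υ (l / 2)) := by
          have := mul_le_mul_of_nonneg_left h2 hl.le
          linarith
        have h4 : l * deriv υ l / υ l ≤ 2 * (υ l - υ (l / 2)) / υ l :=
          div_le_div_of_nonneg_right h3 hul.le
        have h5 : 2 * (υ l - υ (l / 2)) / υ l = -(2 * ((υ (l / 2) - υ l) / υ l)) := by
          field_simp; ring
        have h6 : -B ≤ (υ (l / 2) - υ l) / υ l := by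
          rw [← key2]; exact habs2'
        have h7 : 2 * (υ l - υ (l / 2)) / υ l ≤ 2 * B := by rw [h5]; linarith
        have hUB : 2 * B ≤ U l := by
          have hUeq : U l = K * (A + B) := rfl
          rw [hUeq]
          have p1 : 2 * B ≤ K * B := mul_le_mul_of_nonneg_right h2K hAB.2
          have p2 : K * B ≤ K * (A + B) := mul_le_mul_of_nonneg_left (by linarith [hAB.1]) hKpos.le
          linarith
        linarith
end
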